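/- (Variational principle for Poisson's equations, Theorem 3.1(3.2) of the paper.) Assume the Poisson-solution setting below with c = ∫_D u ξ dx > 0, and assume in addition that ℰ_β(h,h) ≥ 0 for every h ∈ M₀. Then ℰ_β(ũ,u) = ∫_D ũ ξ dx = ∫_D u ξ dx = c, and 1/ℰ_β(ũ,u) = inf over f ∈ M₁ of (sup over g ∈ M₀ of ℰ_β(f−g, f+g)), the inner supremum and outer infimum being taken in the extended reals; moreover the value is attained at f = (w+w̃)/2 and g = (w−w̃)/2. -/

import Mathlib

open MeasureTheory

noncomputable section

/-- Partial derivative of `f` in the `i`-th coordinate direction. -/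
def pd {d : ℕ} (f : (Fin d → ℝ) → ℝ) (i : Fin d) (x : Fin d → ℝ) : ℝ :=
  fderiv ℝ f x (Pi.single i 1)

/-- Divergence of a vector field on `ℝ^d`: `div F = Σ_i ∂_i F_i`. -/
def divg {d : ℕ} (F : (Fin d → ℝ) → (Fin d → ℝ)) (x : Fin d → ℝ) : ℝ :=
  ∑ i, fderiv ℝ (fun y => F y i) x (Pi.single i 1)

/-- The vector field `a∇g`, i.e. `(a∇g)_i = Σ_j a_{ij} ∂_j g`. -/
def aGrad {d : ℕ} (a : (Fin d → ℝ) → Matrix (Fin d) (Fin d) ℝ)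
    (g : (Fin d → ℝ) → ℝ) (x : Fin d → ℝ) : Fin d → ℝ :=
  fun i => ∑ j, a x i j * pd g j x

/-- The operator `Lg = ∇·(a∇g) + b·∇g`. -/
def Lop {d : ℕ} (a : (Fin d → ℝ) → Matrix (Fin d) (Fin d) ℝ)
    (b : (Fin d → ℝ) → (Fin d → ℝ)) (g : (Fin d → ℝ) → ℝ) (x : Fin d → ℝ) : ℝ :=
  divg (aGrad a g) x + ∑ i, b x i * pd g i x

/-- The formal adjoint `L̃f = ∇·(a∇f) − b·∇f − div(b) f`. -/
def Ladj {d : ℕ} (a : (Fin d → ℝ) → Matrix (Fin d) (Fin d) ℝ)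
    (b : (Fin d → ℝ) → (Fin d → ℝ)) (f : (Fin d → ℝ) → ℝ) (x : Fin d → ℝ) : ℝ :=
  divg (aGrad a f) x - (∑ i, b x i * pd f i x) - divg b x * f x

/-- `∇f · a ∇g = Σ_{i,j} (∂_i f) a_{ij} (∂_j g)`. -/
def quadF {d : ℕ} (a : (Fin d → ℝ) → Matrix (Fin d) (Fin d) ℝ)
    (f g : (Fin d → ℝ) → ℝ) (x : Fin d → ℝ) : ℝ :=
  ∑ i, ∑ j, pd f i x * a x i j * pd g j x

/-- `f` is C² on an open neighborhood of the closure of `D`. -/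
def C2Near {d : ℕ} (D : Set (Fin d → ℝ)) (f : (Fin d → ℝ) → ℝ) : Prop :=
  ∃ U : Set (Fin d → ℝ), IsOpen U ∧ closure D ⊆ U ∧ ContDiffOn ℝ 2 f U

/-- A vector field is C¹ on an open neighborhood of the closure of `D`. -/
def C1NearVF {d : ℕ} (D : Set (Fin d → ℝ)) (F : (Fin d → ℝ) → (Fin d → ℝ)) : Prop :=
  ∃ U : Set (Fin d → ℝ), IsOpen U ∧ closure D ⊆ U ∧ ∀ i, ContDiffOn ℝ 1 (fun x => F x i) U

/-- `D` has the divergence property: `∫_D div F = 0` for every vector field `F` which is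
C¹ on an open neighborhood of the closure of `D` and vanishes on the frontier of `D`. -/
def DivProp {d : ℕ} (D : Set (Fin d → ℝ)) : Prop :=
  ∀ F : (Fin d → ℝ) → (Fin d → ℝ), C1NearVF D F → (∀ x ∈ frontier D, F x = 0) →
    ∫ x in D, divg F x = 0

/-- The bilinear form `ℰ_β(f,g) = ∫_D f ((β−L)g) dx`. -/
def Eform {d : ℕ} (D : Set (Fin d → ℝ)) (a : (Fin d → ℝ) → Matrix (Fin d) (Fin d) ℝ)
    (b : (Fin d → ℝ) → (Fin d → ℝ)) (β : ℝ) (f g : (Fin d → ℝ) → ℝ) : ℝ :=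
  ∫ x in D, f x * (β * g x - Lop a b g x)

/-- `M_δ`: functions that are C² near the closure of `D`, vanish on `∂D`, and have
`∫_D h ξ dx = δ`. -/
def MemM {d : ℕ} (D : Set (Fin d → ℝ)) (ξ : (Fin d → ℝ) → ℝ) (δ : ℝ)
    (h : (Fin d → ℝ) → ℝ) : Prop :=
  C2Near D h ∧ (∀ x ∈ frontier D, h x = 0) ∧ (∫ x in D, h x * ξ x) = δ

open MeasureTheory Bornology

variable {d : ℕ}

lemma integrableOn_of_contOn {D U : Set (Fin d → ℝ)} (hDb : IsBounded D)
    (hDU : closure D ⊆ U) {φ : (Fin d → ℝ) → ℝ} (hφ : ContinuousOn φ U) :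
    IntegrableOn φ D volume := by
  have hc : IsCompact (closure D) := hDb.isCompact_closure
  exact ((hφ.mono hDU).integrableOn_compact hc).mono_set subset_closure

lemma pd_contDiffOn {U : Set (Fin d → ℝ)} (hU : IsOpen U) {h : (Fin d → ℝ) → ℝ}
    (hh : ContDiffOn ℝ 2 h U) (j : Fin d) : ContDiffOn ℝ 1 (fun x => pd h j x) U := by
  have h1 : ContDiffOn ℝ 1 (fun x => fderiv ℝ h x) U :=
    hh.fderiv_of_isOpen hU (by norm_num)
  have := (ContinuousLinearMap.apply ℝ ℝ (Pi.single j (1:ℝ))).contDiff.comp_contDiffOn h1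
  exact this

lemma pd_continuousOn {U : Set (Fin d → ℝ)} (hU : IsOpen U) {h : (Fin d → ℝ) → ℝ}
    (hh : ContDiffOn ℝ 2 h U) (j : Fin d) : ContinuousOn (fun x => pd h j x) U :=
  (pd_contDiffOn hU hh j).continuousOn

lemma aGrad_contDiffOn {U : Set (Fin d → ℝ)} (hU : IsOpen U)
    {a : (Fin d → ℝ) → Matrix (Fin d) (Fin d) ℝ} (ha : ∀ i j, ContDiff ℝ 1 (fun x => a x i j))
    {h : (Fin d → ℝ) → ℝ} (hh : ContDiffOn ℝ 2 h U) (i : Fin d) :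
    ContDiffOn ℝ 1 (fun x => aGrad a h x i) U := by
  unfold aGrad
  exact ContDiffOn.sum fun j _ =>
    ((ha i j).contDiffOn).mul (pd_contDiffOn hU hh j)

lemma divg_continuousOn {U : Set (Fin d → ℝ)} (hU : IsOpen U)
    {G : (Fin d → ℝ) → (Fin d → ℝ)} (hG : ∀ i, ContDiffOn ℝ 1 (fun x => G x i) U) :
    ContinuousOn (divg G) U := by
  unfold divg
  exact continuousOn_finset_sum _ fun i _ => by
    have h1 : ContinuousOn (fun x => fderiv ℝ (fun y => G y i) x) U :=
      (hG i).continuousOn_fderiv_of_isOpen hU le_rfl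
    exact ((ContinuousLinearMap.apply ℝ ℝ (Pi.single i (1:ℝ))).continuous).comp_continuousOn h1

lemma Lop_continuousOn {U : Set (Fin d → ℝ)} (hU : IsOpen U)
    {a : (Fin d → ℝ) → Matrix (Fin d) (Fin d) ℝ} (ha : ∀ i j, ContDiff ℝ 1 (fun x => a x i j))
    {b : (Fin d → ℝ) → (Fin d → ℝ)} (hb : ∀ i, ContDiff ℝ 1 (fun x => b x i))
    {h : (Fin d → ℝ) → ℝ} (hh : ContDiffOn ℝ 2 h U) :
    ContinuousOn (Lop a b h) U := by
  unfold Lop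
  refine (divg_continuousOn hU fun i => aGrad_contDiffOn hU ha hh i).add ?_
  exact continuousOn_finset_sum _ fun i _ =>
    ((hb i).continuous.continuousOn).mul (pd_continuousOn hU hh i)

lemma Ladj_continuousOn {U : Set (Fin d → ℝ)} (hU : IsOpen U)
    {a : (Fin d → ℝ) → Matrix (Fin d) (Fin d) ℝ} (ha : ∀ i j, ContDiff ℝ 1 (fun x => a x i j))
    {b : (Fin d → ℝ) → (Fin d → ℝ)} (hb : ∀ i, ContDiff ℝ 1 (fun x => b x i))
    {h : (Fin d → ℝ) → ℝ} (hh : ContDiffOn ℝ 2 h U) :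
    ContinuousOn (Ladj a b h) U := by
  unfold Ladj
  refine ((divg_continuousOn hU fun i => aGrad_contDiffOn hU ha hh i).sub
    (continuousOn_finset_sum _ fun i _ =>
      ((hb i).continuous.continuousOn).mul (pd_continuousOn hU hh i))).sub ?_
  have hdb : ContinuousOn (divg b) U := by
    unfold divg
    refine continuousOn_finset_sum _ fun i _ => Continuous.continuousOn ?_
    exact ((ContinuousLinearMap.apply ℝ ℝ (Pi.single i (1:ℝ))).continuous).comp
      ((hb i).continuous_fderiv one_ne_zero)
  exact hdb.mul (hh.continuousOn)

lemma diffAt_of_c2 {U : Set (Fin d → ℝ)} (hU : IsOpen U) {h : (Fin d → ℝ) → ℝ}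
    (hh : ContDiffOn ℝ 2 h U) {x : Fin d → ℝ} (hx : x ∈ U) : DifferentiableAt ℝ h x :=
  (hh.contDiffAt (hU.mem_nhds hx)).differentiableAt (by norm_num)

lemma diffAt_aGrad {U : Set (Fin d → ℝ)} (hU : IsOpen U)
    {a : (Fin d → ℝ) → Matrix (Fin d) (Fin d) ℝ} (ha : ∀ i j, ContDiff ℝ 1 (fun x => a x i j))
    {h : (Fin d → ℝ) → ℝ} (hh : ContDiffOn ℝ 2 h U) (i : Fin d) {x : Fin d → ℝ} (hx : x ∈ U) :
    DifferentiableAt ℝ (fun y => aGrad a h y i) x :=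
  ((aGrad_contDiffOn hU ha hh i).contDiffAt (hU.mem_nhds hx)).differentiableAt one_ne_zero

lemma pd_comb {h₁ h₂ : (Fin d → ℝ) → ℝ} {x : Fin d → ℝ} (p q : ℝ)
    (h1 : DifferentiableAt ℝ h₁ x) (h2 : DifferentiableAt ℝ h₂ x) (i : Fin d) :
    pd (fun y => p * h₁ y + q * h₂ y) i x = p * pd h₁ i x + q * pd h₂ i x := by
  unfold pd
  rw [fderiv_fun_add (h1.const_mul p) (h2.const_mul q), fderiv_const_mul h1, fderiv_const_mul h2]
  simp

lemma aGrad_comb {a : (Fin d → ℝ) → Matrix (Fin d) (Fin d) ℝ}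
    {h₁ h₂ : (Fin d → ℝ) → ℝ} {x : Fin d → ℝ} (p q : ℝ)
    (h1 : DifferentiableAt ℝ h₁ x) (h2 : DifferentiableAt ℝ h₂ x) (i : Fin d) :
    aGrad a (fun y => p * h₁ y + q * h₂ y) x i = p * aGrad a h₁ x i + q * aGrad a h₂ x i := by
  unfold aGrad
  rw [Finset.mul_sum, Finset.mul_sum, ← Finset.sum_add_distrib]
  refine Finset.sum_congr rfl fun j _ => ?_
  rw [pd_comb p q h1 h2 j]; ring

lemma divg_aGrad_comb {U : Set (Fin d → ℝ)} (hU : IsOpen U)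
    {a : (Fin d → ℝ) → Matrix (Fin d) (Fin d) ℝ} (ha : ∀ i j, ContDiff ℝ 1 (fun x => a x i j))
    {h₁ h₂ : (Fin d → ℝ) → ℝ} (hh1 : ContDiffOn ℝ 2 h₁ U) (hh2 : ContDiffOn ℝ 2 h₂ U)
    (p q : ℝ) {x : Fin d → ℝ} (hx : x ∈ U) :
    divg (aGrad a (fun y => p * h₁ y + q * h₂ y)) x
      = p * divg (aGrad a h₁) x + q * divg (aGrad a h₂) x := by
  unfold divg
  rw [Finset.mul_sum, Finset.mul_sum, ← Finset.sum_add_distrib]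
  refine Finset.sum_congr rfl fun i _ => ?_
  have hev : (fun y => aGrad a (fun z => p * h₁ z + q * h₂ z) y i)
      =ᶠ[nhds x] fun y => p * aGrad a h₁ y i + q * aGrad a h₂ y i := by
    filter_upwards [hU.mem_nhds hx] with y hy
    exact aGrad_comb p q (diffAt_of_c2 hU hh1 hy) (diffAt_of_c2 hU hh2 hy) i
  have d1 := diffAt_aGrad hU ha hh1 i hx
  have d2 := diffAt_aGrad hU ha hh2 i hx
  rw [hev.fderiv_eq, fderiv_fun_add (d1.const_mul p) (d2.const_mul q),
    fderiv_const_mul d1, fderiv_const_mul d2]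
  simp

lemma Lop_comb {U : Set (Fin d → ℝ)} (hU : IsOpen U)
    {a : (Fin d → ℝ) → Matrix (Fin d) (Fin d) ℝ} (ha : ∀ i j, ContDiff ℝ 1 (fun x => a x i j))
    (b : (Fin d → ℝ) → (Fin d → ℝ))
    {h₁ h₂ : (Fin d → ℝ) → ℝ} (hh1 : ContDiffOn ℝ 2 h₁ U) (hh2 : ContDiffOn ℝ 2 h₂ U)
    (p q : ℝ) {x : Fin d → ℝ} (hx : x ∈ U) :
    Lop a b (fun y => p * h₁ y + q * h₂ y) x = p * Lop a b h₁ x + q * Lop a b h₂ x := by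
  unfold Lop
  rw [divg_aGrad_comb hU ha hh1 hh2 p q hx]
  have : ∀ i : Fin d, b x i * pd (fun y => p * h₁ y + q * h₂ y) i x
      = p * (b x i * pd h₁ i x) + q * (b x i * pd h₂ i x) := fun i => by
    rw [pd_comb p q (diffAt_of_c2 hU hh1 hx) (diffAt_of_c2 hU hh2 hx) i]; ring
  rw [Finset.sum_congr rfl fun i _ => this i, Finset.sum_add_distrib,
    ← Finset.mul_sum, ← Finset.mul_sum]
  ring

lemma Ladj_comb {U : Set (Fin d → ℝ)} (hU : IsOpen U)
    {a : (Fin d → ℝ) → Matrix (Fin d) (Fin d) ℝ} (ha : ∀ i j, ContDiff ℝ 1 (fun x => a x i j))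
    (b : (Fin d → ℝ) → (Fin d → ℝ))
    {h₁ h₂ : (Fin d → ℝ) → ℝ} (hh1 : ContDiffOn ℝ 2 h₁ U) (hh2 : ContDiffOn ℝ 2 h₂ U)
    (p q : ℝ) {x : Fin d → ℝ} (hx : x ∈ U) :
    Ladj a b (fun y => p * h₁ y + q * h₂ y) x = p * Ladj a b h₁ x + q * Ladj a b h₂ x := by
  unfold Ladj
  rw [divg_aGrad_comb hU ha hh1 hh2 p q hx]
  have : ∀ i : Fin d, b x i * pd (fun y => p * h₁ y + q * h₂ y) i x
      = p * (b x i * pd h₁ i x) + q * (b x i * pd h₂ i x) := fun i => by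
    rw [pd_comb p q (diffAt_of_c2 hU hh1 hx) (diffAt_of_c2 hU hh2 hx) i]; ring
  rw [Finset.sum_congr rfl fun i _ => this i, Finset.sum_add_distrib,
    ← Finset.mul_sum, ← Finset.mul_sum]
  ring

lemma sum_pd_aGrad_symm {a : (Fin d → ℝ) → Matrix (Fin d) (Fin d) ℝ}
    {f g : (Fin d → ℝ) → ℝ} {x : Fin d → ℝ} (hsym : ∀ i j, a x i j = a x j i) :
    ∑ i, pd f i x * aGrad a g x i = ∑ i, pd g i x * aGrad a f x i := by
  unfold aGrad
  simp only [Finset.mul_sum]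
  rw [Finset.sum_comm]
  refine Finset.sum_congr rfl fun j _ => Finset.sum_congr rfl fun i _ => ?_
  rw [hsym i j]; ring

lemma divg_F_eq {U : Set (Fin d → ℝ)} (hU : IsOpen U)
    {a : (Fin d → ℝ) → Matrix (Fin d) (Fin d) ℝ} (ha : ∀ i j, ContDiff ℝ 1 (fun x => a x i j))
    {b : (Fin d → ℝ) → (Fin d → ℝ)} (hb : ∀ i, ContDiff ℝ 1 (fun x => b x i))
    {f g : (Fin d → ℝ) → ℝ} (hf : ContDiffOn ℝ 2 f U) (hg : ContDiffOn ℝ 2 g U)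
    {x : Fin d → ℝ} (hx : x ∈ U) (hsym : ∀ i j, a x i j = a x j i) :
    divg (fun y i => f y * aGrad a g y i - g y * aGrad a f y i + f y * g y * b y i) x
      = f x * Lop a b g x - g x * Ladj a b f x := by
  have df := diffAt_of_c2 hU hf hx
  have dg := diffAt_of_c2 hU hg hx
  have key : divg (fun y i => f y * aGrad a g y i - g y * aGrad a f y i + f y * g y * b y i) x
      = ∑ i, (pd f i x * aGrad a g x i
          + f x * fderiv ℝ (fun y => aGrad a g y i) x (Pi.single i 1)
          - pd g i x * aGrad a f x i
          - g x * fderiv ℝ (fun y => aGrad a f y i) x (Pi.single i 1)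
          + g x * (b x i * pd f i x) + f x * (b x i * pd g i x)
          + f x * g x * fderiv ℝ (fun y => b y i) x (Pi.single i 1)) := by
    unfold divg
    refine Finset.sum_congr rfl fun i _ => ?_
    have dAg := diffAt_aGrad hU ha hg i hx
    have dAf := diffAt_aGrad hU ha hf i hx
    have dbi : DifferentiableAt ℝ (fun y => b y i) x := (hb i).differentiable one_ne_zero x
    have m1 : DifferentiableAt ℝ (fun y => f y * aGrad a g y i) x := df.mul dAg
    have m2 : DifferentiableAt ℝ (fun y => g y * aGrad a f y i) x := dg.mul dAf
    have m3 : DifferentiableAt ℝ (fun y => f y * g y) x := df.mul dg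
    have m4 : DifferentiableAt ℝ (fun y => f y * aGrad a g y i - g y * aGrad a f y i) x :=
      m1.sub m2
    have m5 : DifferentiableAt ℝ (fun y => f y * g y * b y i) x := m3.mul dbi
    show fderiv ℝ (fun y => f y * aGrad a g y i - g y * aGrad a f y i + f y * g y * b y i) x
      (Pi.single i 1) = _
    rw [fderiv_fun_add m4 m5,
      fderiv_fun_sub m1 m2, fderiv_fun_mul df dAg, fderiv_fun_mul dg dAf,
      fderiv_fun_mul m3 dbi, fderiv_fun_mul df dg]
    simp only [ContinuousLinearMap.add_apply, ContinuousLinearMap.sub_apply,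
      ContinuousLinearMap.smul_apply, ContinuousLinearMap.coe_smul', Pi.smul_apply,
      smul_eq_mul, pd]
    ring
  rw [key]
  simp only [Finset.sum_add_distrib, Finset.sum_sub_distrib, ← Finset.mul_sum]
  rw [sum_pd_aGrad_symm hsym]
  unfold Lop Ladj divg
  ring

lemma adjoint_int {D : Set (Fin d → ℝ)} (hD : IsOpen D) (hDb : IsBounded D)
    (hdiv : DivProp D)
    {a : (Fin d → ℝ) → Matrix (Fin d) (Fin d) ℝ} (ha : ∀ i j, ContDiff ℝ 1 (fun x => a x i j))
    (hsym : ∀ x i j, a x i j = a x j i)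
    {b : (Fin d → ℝ) → (Fin d → ℝ)} (hb : ∀ i, ContDiff ℝ 1 (fun x => b x i))
    {f g : (Fin d → ℝ) → ℝ} (hf : C2Near D f) (hf0 : ∀ x ∈ frontier D, f x = 0)
    (hg : C2Near D g) (hg0 : ∀ x ∈ frontier D, g x = 0) :
    ∫ x in D, f x * Lop a b g x = ∫ x in D, g x * Ladj a b f x := by
  obtain ⟨Uf, hUf, hDUf, hff⟩ := hf
  obtain ⟨Ug, hUg, hDUg, hgg⟩ := hg
  set U := Uf ∩ Ug with hUdef
  have hU : IsOpen U := hUf.inter hUg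
  have hDU : closure D ⊆ U := Set.subset_inter hDUf hDUg
  have hfU : ContDiffOn ℝ 2 f U := hff.mono Set.inter_subset_left
  have hgU : ContDiffOn ℝ 2 g U := hgg.mono Set.inter_subset_right
  set F : (Fin d → ℝ) → (Fin d → ℝ) :=
    fun y i => f y * aGrad a g y i - g y * aGrad a f y i + f y * g y * b y i with hF
  have hFC1 : C1NearVF D F := by
    refine ⟨U, hU, hDU, fun i => ?_⟩
    have h1 : ContDiffOn ℝ 1 f U := hfU.of_le (by norm_num)
    have h2 : ContDiffOn ℝ 1 g U := hgU.of_le (by norm_num)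
    exact ((h1.mul (aGrad_contDiffOn hU ha hgU i)).sub
      (h2.mul (aGrad_contDiffOn hU ha hfU i))).add
      ((h1.mul h2).mul ((hb i).contDiffOn))
  have hF0 : ∀ x ∈ frontier D, F x = 0 := by
    intro x hx
    funext i
    simp [hF, hf0 x hx, hg0 x hx]
  have hzero := hdiv F hFC1 hF0
  have hEq : ∀ x ∈ D, divg F x = f x * Lop a b g x - g x * Ladj a b f x := fun x hx =>
    divg_F_eq hU ha hb hfU hgU (hDU (subset_closure hx)) (hsym x)
  have hInt1 : IntegrableOn (fun x => f x * Lop a b g x) D volume :=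
    integrableOn_of_contOn hDb hDU (hfU.continuousOn.mul (Lop_continuousOn hU ha hb hgU))
  have hInt2 : IntegrableOn (fun x => g x * Ladj a b f x) D volume :=
    integrableOn_of_contOn hDb hDU (hgU.continuousOn.mul (Ladj_continuousOn hU ha hb hfU))
  have : ∫ x in D, (f x * Lop a b g x - g x * Ladj a b f x) = 0 := by
    rw [← setIntegral_congr_fun hD.measurableSet hEq]
    exact hzero
  rw [integral_sub hInt1 hInt2] at this
  linarith

lemma Lop_div {U : Set (Fin d → ℝ)} (hU : IsOpen U)
    {a : (Fin d → ℝ) → Matrix (Fin d) (Fin d) ℝ} (ha : ∀ i j, ContDiff ℝ 1 (fun x => a x i j))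
    (b : (Fin d → ℝ) → (Fin d → ℝ)) {h : (Fin d → ℝ) → ℝ} (hh : ContDiffOn ℝ 2 h U)
    {x : Fin d → ℝ} (hx : x ∈ U) (c : ℝ) :
    Lop a b (fun y => h y / c) x = Lop a b h x / c := by
  have e : (fun y => h y / c) = fun y => (1/c) * h y + 0 * h y := funext fun y => by ring
  rw [e, Lop_comb hU ha b hh hh (1/c) 0 hx]; ring

lemma Ladj_div {U : Set (Fin d → ℝ)} (hU : IsOpen U)
    {a : (Fin d → ℝ) → Matrix (Fin d) (Fin d) ℝ} (ha : ∀ i j, ContDiff ℝ 1 (fun x => a x i j))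
    (b : (Fin d → ℝ) → (Fin d → ℝ)) {h : (Fin d → ℝ) → ℝ} (hh : ContDiffOn ℝ 2 h U)
    {x : Fin d → ℝ} (hx : x ∈ U) (c : ℝ) :
    Ladj a b (fun y => h y / c) x = Ladj a b h x / c := by
  have e : (fun y => h y / c) = fun y => (1/c) * h y + 0 * h y := funext fun y => by ring
  rw [e, Ladj_comb hU ha b hh hh (1/c) 0 hx]; ring

lemma C2Near_comb {D : Set (Fin d → ℝ)} {h₁ h₂ : (Fin d → ℝ) → ℝ} (p q : ℝ)
    (h1 : C2Near D h₁) (h2 : C2Near D h₂) : C2Near D (fun x => p * h₁ x + q * h₂ x) := by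
  obtain ⟨U₁, hU₁, hD₁, hc₁⟩ := h1
  obtain ⟨U₂, hU₂, hD₂, hc₂⟩ := h2
  exact ⟨U₁ ∩ U₂, hU₁.inter hU₂, Set.subset_inter hD₁ hD₂,
    (contDiffOn_const.mul (hc₁.mono Set.inter_subset_left)).add
      (contDiffOn_const.mul (hc₂.mono Set.inter_subset_right))⟩

lemma Eform_adj {D : Set (Fin d → ℝ)} (hD : IsOpen D) (hDb : IsBounded D)
    (hdiv : DivProp D)
    {a : (Fin d → ℝ) → Matrix (Fin d) (Fin d) ℝ} (ha : ∀ i j, ContDiff ℝ 1 (fun x => a x i j))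
    (hsym : ∀ x i j, a x i j = a x j i)
    {b : (Fin d → ℝ) → (Fin d → ℝ)} (hb : ∀ i, ContDiff ℝ 1 (fun x => b x i)) (β : ℝ)
    {f g : (Fin d → ℝ) → ℝ} (hf : C2Near D f) (hf0 : ∀ x ∈ frontier D, f x = 0)
    (hg : C2Near D g) (hg0 : ∀ x ∈ frontier D, g x = 0) :
    Eform D a b β f g = ∫ x in D, g x * (β * f x - Ladj a b f x) := by
  obtain ⟨Uf, hUf, hDUf, hff⟩ := hf
  obtain ⟨Ug, hUg, hDUg, hgg⟩ := hg
  set U := Uf ∩ Ug with hUdef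
  have hU : IsOpen U := hUf.inter hUg
  have hDU : closure D ⊆ U := Set.subset_inter hDUf hDUg
  have hfU : ContDiffOn ℝ 2 f U := hff.mono Set.inter_subset_left
  have hgU : ContDiffOn ℝ 2 g U := hgg.mono Set.inter_subset_right
  have hIfg : IntegrableOn (fun x => f x * g x) D volume :=
    integrableOn_of_contOn hDb hDU (hfU.continuousOn.mul hgU.continuousOn)
  have hIfLg : IntegrableOn (fun x => f x * Lop a b g x) D volume :=
    integrableOn_of_contOn hDb hDU (hfU.continuousOn.mul (Lop_continuousOn hU ha hb hgU))
  have hIgLf : IntegrableOn (fun x => g x * Ladj a b f x) D volume :=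
    integrableOn_of_contOn hDb hDU (hgU.continuousOn.mul (Ladj_continuousOn hU ha hb hfU))
  have e1 : Eform D a b β f g
      = β * (∫ x in D, f x * g x) - ∫ x in D, f x * Lop a b g x := by
    unfold Eform
    rw [show (fun x => f x * (β * g x - Lop a b g x))
        = fun x => β * (f x * g x) - f x * Lop a b g x from funext fun x => by ring]
    rw [integral_sub (hIfg.const_mul β) hIfLg, integral_const_mul]
  have e2 : (∫ x in D, g x * (β * f x - Ladj a b f x))
      = β * (∫ x in D, f x * g x) - ∫ x in D, g x * Ladj a b f x := by
    rw [show (fun x => g x * (β * f x - Ladj a b f x))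
        = fun x => β * (f x * g x) - g x * Ladj a b f x from funext fun x => by
          ring]
    rw [integral_sub (hIfg.const_mul β) hIgLf, integral_const_mul]
  rw [e1, e2, adjoint_int hD hDb hdiv ha hsym hb ⟨Uf, hUf, hDUf, hff⟩ hf0 ⟨Ug, hUg, hDUg, hgg⟩ hg0]

def ContNear {d : ℕ} (D : Set (Fin d → ℝ)) (φ : (Fin d → ℝ) → ℝ) : Prop :=
  ∃ U : Set (Fin d → ℝ), IsOpen U ∧ closure D ⊆ U ∧ ContinuousOn φ U

lemma C2Near.contNear {D : Set (Fin d → ℝ)} {h : (Fin d → ℝ) → ℝ} (hh : C2Near D h) :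
    ContNear D h := by
  obtain ⟨U, h1, h2, h3⟩ := hh
  exact ⟨U, h1, h2, h3.continuousOn⟩

lemma ContNear.mul {D : Set (Fin d → ℝ)} {φ ψ : (Fin d → ℝ) → ℝ}
    (h1 : ContNear D φ) (h2 : ContNear D ψ) : ContNear D (fun x => φ x * ψ x) := by
  obtain ⟨U₁, hU₁, hD₁, hc₁⟩ := h1
  obtain ⟨U₂, hU₂, hD₂, hc₂⟩ := h2
  exact ⟨U₁ ∩ U₂, hU₁.inter hU₂, Set.subset_inter hD₁ hD₂,
    (hc₁.mono Set.inter_subset_left).mul (hc₂.mono Set.inter_subset_right)⟩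

lemma ContNear.comb {D : Set (Fin d → ℝ)} {φ ψ : (Fin d → ℝ) → ℝ} (p q : ℝ)
    (h1 : ContNear D φ) (h2 : ContNear D ψ) : ContNear D (fun x => p * φ x + q * ψ x) := by
  obtain ⟨U₁, hU₁, hD₁, hc₁⟩ := h1
  obtain ⟨U₂, hU₂, hD₂, hc₂⟩ := h2
  exact ⟨U₁ ∩ U₂, hU₁.inter hU₂, Set.subset_inter hD₁ hD₂,
    ((continuousOn_const).mul (hc₁.mono Set.inter_subset_left)).add
      ((continuousOn_const).mul (hc₂.mono Set.inter_subset_right))⟩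

lemma contNear_Lop {D : Set (Fin d → ℝ)}
    {a : (Fin d → ℝ) → Matrix (Fin d) (Fin d) ℝ} (ha : ∀ i j, ContDiff ℝ 1 (fun x => a x i j))
    {b : (Fin d → ℝ) → (Fin d → ℝ)} (hb : ∀ i, ContDiff ℝ 1 (fun x => b x i))
    {h : (Fin d → ℝ) → ℝ} (hh : C2Near D h) : ContNear D (Lop a b h) := by
  obtain ⟨U, h1, h2, h3⟩ := hh
  exact ⟨U, h1, h2, Lop_continuousOn h1 ha hb h3⟩

lemma ContNear.integrableOn {D : Set (Fin d → ℝ)} (hDb : IsBounded D)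
    {φ : (Fin d → ℝ) → ℝ} (h : ContNear D φ) : IntegrableOn φ D volume := by
  obtain ⟨U, h1, h2, h3⟩ := h
  exact integrableOn_of_contOn hDb h2 h3

/-- the variational principle (3.2): `1/ℰ_β(ũ,u) = inf_{f∈M₁} sup_{g∈M₀}
ℰ_β(f−g, f+g)` in the extended reals, attained at `f = w̄ = (w+w̃)/2`, `g = ŵ = (w−w̃)/2`. -/
theorem stmt8 {d : ℕ} (D : Set (Fin d → ℝ)) (hD : IsOpen D)
    (hDb : Bornology.IsBounded D) (hdiv : DivProp D)
    (a : (Fin d → ℝ) → Matrix (Fin d) (Fin d) ℝ)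
    (ha : ∀ i j, ContDiff ℝ 1 (fun x => a x i j))
    (hsym : ∀ x i j, a x i j = a x j i)
    (b : (Fin d → ℝ) → (Fin d → ℝ)) (hb : ∀ i, ContDiff ℝ 1 (fun x => b x i))
    (β : ℝ) (hβ : 0 ≤ β)
    (ξ : (Fin d → ℝ) → ℝ)
    (hξ : ∃ U : Set (Fin d → ℝ), IsOpen U ∧ closure D ⊆ U ∧ ContinuousOn ξ U)
    (u ut : (Fin d → ℝ) → ℝ)
    (hu : C2Near D u) (hu0 : ∀ x ∈ frontier D, u x = 0)
    (hueq : ∀ x ∈ D, β * u x - Lop a b u x = ξ x)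
    (hut : C2Near D ut) (hut0 : ∀ x ∈ frontier D, ut x = 0)
    (huteq : ∀ x ∈ D, β * ut x - Ladj a b ut x = ξ x)
    (c : ℝ) (hc : c = ∫ x in D, u x * ξ x) (hcpos : 0 < c)
    (hE0 : ∀ h, MemM D ξ 0 h → 0 ≤ Eform D a b β h h)
    (wbar what : (Fin d → ℝ) → ℝ)
    (hwbar : ∀ x, wbar x = (u x / c + ut x / c) / 2)
    (hwhat : ∀ x, what x = (u x / c - ut x / c) / 2) :
    Eform D a b β ut u = c ∧ (∫ x in D, ut x * ξ x) = c ∧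
    (⨅ f : {f : (Fin d → ℝ) → ℝ // MemM D ξ 1 f},
        ⨆ g : {g : (Fin d → ℝ) → ℝ // MemM D ξ 0 g},
          ((Eform D a b β (f.1 - g.1) (f.1 + g.1) : ℝ) : EReal))
      = ((1 / Eform D a b β ut u : ℝ) : EReal) ∧
    MemM D ξ 1 wbar ∧ MemM D ξ 0 what ∧
    (⨆ g : {g : (Fin d → ℝ) → ℝ // MemM D ξ 0 g},
        ((Eform D a b β (wbar - g.1) (wbar + g.1) : ℝ) : EReal)) = ((1 / c : ℝ) : EReal) ∧
    Eform D a b β (wbar - what) (wbar + what) = 1 / c := by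
  obtain ⟨Uu, hUu, hDUu, huu⟩ := hu
  obtain ⟨Uut, hUut, hDUut, hutut⟩ := hut
  have hu' : C2Near D u := ⟨Uu, hUu, hDUu, huu⟩
  have hut' : C2Near D ut := ⟨Uut, hUut, hDUut, hutut⟩
  obtain ⟨Uξ, hUξ, hDUξ, hξc⟩ := hξ
  have hξ' : ContNear D ξ := ⟨Uξ, hUξ, hDUξ, hξc⟩
  have hcne : c ≠ 0 := hcpos.ne'
  have hmD : MeasurableSet D := hD.measurableSet
  have hC2w : C2Near D (fun x => u x / c) := by
    rw [show (fun x => u x / c) = fun x => (1/c) * u x + 0 * u x from funext fun x => by ring]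
    exact C2Near_comb (1/c) 0 hu' hu'
  have hC2wt : C2Near D (fun x => ut x / c) := by
    rw [show (fun x => ut x / c) = fun x => (1/c) * ut x + 0 * ut x from funext fun x => by ring]
    exact C2Near_comb (1/c) 0 hut' hut'
  have hw0 : ∀ x ∈ frontier D, u x / c = 0 := fun x hx => by rw [hu0 x hx]; simp
  have hwt0 : ∀ x ∈ frontier D, ut x / c = 0 := fun x hx => by rw [hut0 x hx]; simp
  have EA : Eform D a b β ut u = ∫ x in D, ut x * ξ x := by
    unfold Eform
    exact setIntegral_congr_fun hmD fun x hx => by rw [hueq x hx]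
  have EB : Eform D a b β ut u = c := by
    rw [Eform_adj hD hDb hdiv ha hsym hb β hut' hut0 hu' hu0, hc]
    exact setIntegral_congr_fun hmD fun x hx => by rw [huteq x hx]
  have hutξ : (∫ x in D, ut x * ξ x) = c := by rw [← EA, EB]
  have Ew : ∀ φ : (Fin d → ℝ) → ℝ,
      Eform D a b β φ (fun x => u x / c) = (1/c) * ∫ x in D, φ x * ξ x := by
    intro φ
    unfold Eform
    rw [setIntegral_congr_fun hmD (g := fun x => (1/c) * (φ x * ξ x)) fun x hx => by
      simp only [Lop_div hUu ha b huu (hDUu (subset_closure hx)) c, ← hueq x hx]; ring]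
    exact integral_const_mul _ _
  have hwξ : (∫ x in D, (u x / c) * ξ x) = 1 := by
    rw [setIntegral_congr_fun hmD (g := fun x => (1/c) * (u x * ξ x)) fun x hx => by ring,
      integral_const_mul, ← hc]
    field_simp
  have hwtξ : (∫ x in D, (ut x / c) * ξ x) = 1 := by
    rw [setIntegral_congr_fun hmD (g := fun x => (1/c) * (ut x * ξ x)) fun x hx => by ring,
      integral_const_mul, hutξ]
    field_simp
  have Ewt : ∀ t : (Fin d → ℝ) → ℝ, C2Near D t → (∀ x ∈ frontier D, t x = 0) →
      Eform D a b β (fun x => ut x / c) t = (1/c) * ∫ x in D, t x * ξ x := by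
    intro t ht2 ht0
    rw [Eform_adj hD hDb hdiv ha hsym hb β hC2wt hwt0 ht2 ht0]
    rw [setIntegral_congr_fun hmD (g := fun x => (1/c) * (t x * ξ x)) fun x hx => by
      simp only [Ladj_div hUut ha b hutut (hDUut (subset_closure hx)) c, ← huteq x hx]; ring]
    exact integral_const_mul _ _
  have hMwbar : MemM D ξ 1 wbar := by
    refine ⟨?_, ?_, ?_⟩
    · rw [show wbar = fun x => (1/2) * (u x / c) + (1/2) * (ut x / c) from
        funext fun x => by rw [hwbar x]; ring]
      exact C2Near_comb _ _ hC2w hC2wt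
    · intro x hx; rw [hwbar x, hu0 x hx, hut0 x hx]; simp
    · rw [setIntegral_congr_fun hmD
        (g := fun x => (1/2) * ((u x / c) * ξ x) + (1/2) * ((ut x / c) * ξ x))
        fun x hx => by rw [hwbar x]; ring,
        integral_add (((hC2w.contNear.mul hξ').integrableOn hDb).const_mul _)
          (((hC2wt.contNear.mul hξ').integrableOn hDb).const_mul _),
        integral_const_mul, integral_const_mul, hwξ, hwtξ]
      norm_num
  have hMwhat : MemM D ξ 0 what := by
    refine ⟨?_, ?_, ?_⟩
    · rw [show what = fun x => (1/2) * (u x / c) + (-(1/2)) * (ut x / c) from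
        funext fun x => by rw [hwhat x]; ring]
      exact C2Near_comb _ _ hC2w hC2wt
    · intro x hx; rw [hwhat x, hu0 x hx, hut0 x hx]; simp
    · rw [setIntegral_congr_fun hmD
        (g := fun x => (1/2) * ((u x / c) * ξ x) + (-(1/2)) * ((ut x / c) * ξ x))
        fun x hx => by rw [hwhat x]; ring,
        integral_add (((hC2w.contNear.mul hξ').integrableOn hDb).const_mul _)
          (((hC2wt.contNear.mul hξ').integrableOn hDb).const_mul _),
        integral_const_mul, integral_const_mul, hwξ, hwtξ]
      norm_num
  have hsup : ∀ g : (Fin d → ℝ) → ℝ, MemM D ξ 0 g →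
      Eform D a b β (wbar - g) (wbar + g) ≤ 1/c := by
    intro g hgM
    have hC2t : C2Near D (fun x => g x - what x) := by
      rw [show (fun x => g x - what x) = fun x => 1 * g x + (-1) * what x from
        funext fun x => by ring]
      exact C2Near_comb 1 (-1) hgM.1 hMwhat.1
    obtain ⟨Ut, hUt, hDUt, htt⟩ := hC2t
    have ht2' : C2Near D (fun x => g x - what x) := ⟨Ut, hUt, hDUt, htt⟩
    have ht0 : ∀ x ∈ frontier D, g x - what x = 0 := fun x hx => by
      rw [hgM.2.1 x hx, hMwhat.2.1 x hx]; ring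
    have htξ : (∫ x in D, (g x - what x) * ξ x) = 0 := by
      rw [setIntegral_congr_fun hmD
        (g := fun x => 1 * (g x * ξ x) + (-1) * (what x * ξ x)) fun x hx => by ring,
        integral_add (((hgM.1.contNear.mul hξ').integrableOn hDb).const_mul _)
          (((hMwhat.1.contNear.mul hξ').integrableOn hDb).const_mul _),
        integral_const_mul, integral_const_mul, hgM.2.2, hMwhat.2.2]
      ring
    have harg1 : wbar - g = fun x => ut x / c - (g x - what x) := funext fun x => by
      simp only [Pi.sub_apply]; rw [hwbar x, hwhat x]; ring
    have harg2 : wbar + g = fun x => u x / c + (g x - what x) := funext fun x => by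
      simp only [Pi.add_apply]; rw [hwbar x, hwhat x]; ring
    rw [harg1, harg2]
    have hps : ∀ x ∈ D,
        β * (u x / c + (g x - what x)) - Lop a b (fun y => u y / c + (g y - what y)) x
          = ξ x / c + (β * (g x - what x) - Lop a b (fun y => g y - what y) x) := by
      intro x hx
      have hxV : x ∈ Uu ∩ Ut := ⟨hDUu (subset_closure hx), hDUt (subset_closure hx)⟩
      rw [show (fun y => u y / c + (g y - what y))
          = fun y => (1/c) * u y + 1 * (g y - what y) from funext fun y => by ring,
        Lop_comb (hUu.inter hUt) ha b (huu.mono Set.inter_subset_left)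
          (htt.mono Set.inter_subset_right) (1/c) 1 hxV, ← hueq x hx]
      ring
    rw [show Eform D a b β (fun x => ut x / c - (g x - what x))
          (fun x => u x / c + (g x - what x))
        = ∫ x in D, (ut x / c - (g x - what x)) *
          (β * (u x / c + (g x - what x)) - Lop a b (fun y => u y / c + (g y - what y)) x)
        from rfl]
    have hint : ∀ x ∈ D, (ut x / c - (g x - what x)) *
        (β * (u x / c + (g x - what x)) - Lop a b (fun y => u y / c + (g y - what y)) x)
        = ((1/c) * ((ut x / c) * ξ x) - (1/c) * ((g x - what x) * ξ x))
          + ((ut x / c) * (β * (g x - what x) - Lop a b (fun y => g y - what y) x)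
             - (g x - what x) * (β * (g x - what x) - Lop a b (fun y => g y - what y) x)) := by
      intro x hx; rw [hps x hx]; ring
    rw [setIntegral_congr_fun hmD hint]
    have hLt : ContNear D
        (fun x => β * (g x - what x) - Lop a b (fun y => g y - what y) x) := by
      rw [show (fun x => β * (g x - what x) - Lop a b (fun y => g y - what y) x)
          = fun x => β * (g x - what x) + (-1) * Lop a b (fun y => g y - what y) x from
          funext fun x => by ring]
      exact ContNear.comb β (-1) ht2'.contNear (contNear_Lop ha hb ht2')
    have I1 : IntegrableOn (fun x => (1/c) * ((ut x / c) * ξ x)) D volume :=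
      ((hC2wt.contNear.mul hξ').integrableOn hDb).const_mul _
    have I2 : IntegrableOn (fun x => (1/c) * ((g x - what x) * ξ x)) D volume :=
      ((ht2'.contNear.mul hξ').integrableOn hDb).const_mul _
    have I3 : IntegrableOn (fun x => (ut x / c) *
        (β * (g x - what x) - Lop a b (fun y => g y - what y) x)) D volume :=
      (hC2wt.contNear.mul hLt).integrableOn hDb
    have I4 : IntegrableOn (fun x => (g x - what x) *
        (β * (g x - what x) - Lop a b (fun y => g y - what y) x)) D volume :=
      (ht2'.contNear.mul hLt).integrableOn hDb
    have I12 : IntegrableOn (fun x => (1/c) * ((ut x / c) * ξ x)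
        - (1/c) * ((g x - what x) * ξ x)) D volume := I1.sub I2
    have I34 : IntegrableOn (fun x => (ut x / c) *
          (β * (g x - what x) - Lop a b (fun y => g y - what y) x)
        - (g x - what x) *
          (β * (g x - what x) - Lop a b (fun y => g y - what y) x)) D volume := I3.sub I4
    rw [integral_add I12 I34, integral_sub I1 I2, integral_sub I3 I4,
      integral_const_mul, integral_const_mul, hwtξ, htξ]
    have h3 : (∫ x in D, (ut x / c) *
        (β * (g x - what x) - Lop a b (fun y => g y - what y) x)) = 0 := by
      have h := Ewt (fun x => g x - what x) ht2' ht0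
      rw [htξ, mul_zero] at h
      exact h
    have h4 : (0:ℝ) ≤ ∫ x in D, (g x - what x) *
        (β * (g x - what x) - Lop a b (fun y => g y - what y) x) :=
      hE0 _ ⟨ht2', ht0, htξ⟩
    rw [h3]
    have h5 : (0:ℝ) < 1/c := by positivity
    linarith
  have harg1' : wbar - what = fun x => ut x / c := funext fun x => by
    simp only [Pi.sub_apply]; rw [hwbar x, hwhat x]; ring
  have harg2' : wbar + what = fun x => u x / c := funext fun x => by
    simp only [Pi.add_apply]; rw [hwbar x, hwhat x]; ring
  have hatt : Eform D a b β (wbar - what) (wbar + what) = 1/c := by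
    rw [harg1', harg2', Ew, hwtξ, mul_one]
  have hsupeq : (⨆ g : {g : (Fin d → ℝ) → ℝ // MemM D ξ 0 g},
      ((Eform D a b β (wbar - g.1) (wbar + g.1) : ℝ) : EReal)) = ((1/c : ℝ) : EReal) := by
    apply le_antisymm
    · exact iSup_le fun g => EReal.coe_le_coe_iff.mpr (hsup g.1 g.2)
    · have h := le_iSup (fun g : {g : (Fin d → ℝ) → ℝ // MemM D ξ 0 g} =>
        ((Eform D a b β (wbar - g.1) (wbar + g.1) : ℝ) : EReal)) ⟨what, hMwhat⟩
      rw [hatt] at h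
      exact h
  have hg₀ : ∀ F : {f : (Fin d → ℝ) → ℝ // MemM D ξ 1 f},
      MemM D ξ 0 (fun x => u x / c - F.1 x) ∧
      Eform D a b β (F.1 - fun x => u x / c - F.1 x)
        (F.1 + fun x => u x / c - F.1 x) = 1/c := by
    rintro ⟨f, hfM⟩
    have hfξ := hfM.2.2
    have hC2g₀ : C2Near D (fun x => u x / c - f x) := by
      rw [show (fun x => u x / c - f x) = fun x => 1 * (u x / c) + (-1) * f x from
        funext fun x => by ring]
      exact C2Near_comb 1 (-1) hC2w hfM.1
    have hg0ξ : (∫ x in D, (u x / c - f x) * ξ x) = 0 := by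
      rw [setIntegral_congr_fun hmD
        (g := fun x => 1 * ((u x / c) * ξ x) + (-1) * (f x * ξ x)) fun x hx => by ring,
        integral_add (((hC2w.contNear.mul hξ').integrableOn hDb).const_mul _)
          (((hfM.1.contNear.mul hξ').integrableOn hDb).const_mul _),
        integral_const_mul, integral_const_mul, hwξ, hfξ]
      ring
    refine ⟨⟨hC2g₀, fun x hx => by show u x / c - f x = 0; rw [hu0 x hx, hfM.2.1 x hx]; simp, hg0ξ⟩, ?_⟩
    have e2 : (f + fun x => u x / c - f x) = fun x => u x / c := funext fun x => by
      simp only [Pi.add_apply]; ring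
    rw [e2, Ew]
    have e3 : (∫ x in D, (f - fun x => u x / c - f x) x * ξ x) = 1 := by
      rw [setIntegral_congr_fun hmD
        (g := fun x => 1 * (f x * ξ x) + (-1) * ((u x / c - f x) * ξ x)) fun x hx => by
          simp only [Pi.sub_apply]; ring,
        integral_add (((hfM.1.contNear.mul hξ').integrableOn hDb).const_mul _)
          (((hC2g₀.contNear.mul hξ').integrableOn hDb).const_mul _),
        integral_const_mul, integral_const_mul, hfξ, hg0ξ]
      ring
    rw [e3, mul_one]
  have hinf : (⨅ f : {f : (Fin d → ℝ) → ℝ // MemM D ξ 1 f},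
      ⨆ g : {g : (Fin d → ℝ) → ℝ // MemM D ξ 0 g},
        ((Eform D a b β (f.1 - g.1) (f.1 + g.1) : ℝ) : EReal)) = ((1/c : ℝ) : EReal) := by
    apply le_antisymm
    · exact iInf_le_of_le ⟨wbar, hMwbar⟩ (le_of_eq hsupeq)
    · refine le_iInf fun F => ?_
      have h := le_iSup (fun g : {g : (Fin d → ℝ) → ℝ // MemM D ξ 0 g} =>
        ((Eform D a b β (F.1 - g.1) (F.1 + g.1) : ℝ) : EReal))
        ⟨(fun x => u x / c - F.1 x), (hg₀ F).1⟩
      rw [(hg₀ F).2] at h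
      exact h
  refine ⟨EB, hutξ, ?_, hMwbar, hMwhat, hsupeq, hatt⟩
  rw [EB]
  exact hinf
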